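/- In a distribution-confluent PARS, two terminal distributions are convertible (related by the symmetric-reflexive-transitive closure of ↠) if and only if they are equivalent: D₁ (↞∪↠)* D₂ ⟺ D₁ ≈ D₂. -/

import Mathlib

open Relation
open scoped NNReal

abbrev PDist (A : Type) := List (ℝ≥0 × A)

namespace PPARS

variable {A X : Type}

/-- Total weight of a list distribution. -/
def weight (D : PDist A) : ℝ≥0 := (D.map Prod.fst).sum

/-- Scale every weight of a distribution by `α`. -/
def scale (α : ℝ≥0) (D : PDist A) : PDist A := D.map (fun pa => (α * pa.1, pa.2))

open Classical in
/-- Total weight that `D` assigns to the element `a`. -/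
noncomputable def wt (D : PDist A) (a : A) : ℝ≥0 :=
  (D.map (fun pa => if pa.2 = a then pa.1 else 0)).sum

/-- The Flip rule, closed under list contexts. -/
inductive FlipS : PDist A → PDist A → Prop
  | mk (E₁ E₂ : PDist A) (p q : ℝ≥0) (a b : A) :
      FlipS (E₁ ++ [(p,a),(q,b)] ++ E₂) (E₁ ++ [(q,b),(p,a)] ++ E₂)

/-- The Join rule, closed under list contexts. -/
inductive JoinS : PDist A → PDist A → Prop
  | mk (E₁ E₂ : PDist A) (p q : ℝ≥0) (a : A) :
      JoinS (E₁ ++ [(p,a),(q,a)] ++ E₂) (E₁ ++ [(p+q,a)] ++ E₂)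

/-- The Split rule, closed under list contexts. -/
inductive SplitS : PDist A → PDist A → Prop
  | mk (E₁ E₂ : PDist A) (p q : ℝ≥0) (a : A) :
      SplitS (E₁ ++ [(p+q,a)] ++ E₂) (E₁ ++ [(p,a),(q,a)] ++ E₂)

/-- One `∼`-step: congruence closure of Flip, Join and Split. -/
def SimStep (D E : PDist A) : Prop := FlipS D E ∨ JoinS D E ∨ SplitS D E

/-- One Flip-or-Join step. -/
def FJ (D E : PDist A) : Prop := FlipS D E ∨ JoinS D E

/-- Distribution equivalence `≈`. -/
def DEquiv : PDist A → PDist A → Prop := ReflTransGen SimStep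

/-- Parallel evolution `⇒_P` for a PARS relation `R`. -/
inductive PEvol (R : A → PDist A → Prop) : PDist A → PDist A → Prop
  | nil : PEvol R [] []
  | keep {ds ds' : PDist A} (p : ℝ≥0) (a : A) :
      PEvol R ds ds' → PEvol R ((p,a) :: ds) ((p,a) :: ds')
  | evolve {a : A} {D ds ds' : PDist A} (p : ℝ≥0) :
      R a D → PEvol R ds ds' → PEvol R ((p,a) :: ds) (scale p D ++ ds')

/-- Proper parallel evolution `⇒_P¹`: at least one element evolves. -/
inductive PEvol1 (R : A → PDist A → Prop) : PDist A → PDist A → Prop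
  | evolve {a : A} {D ds ds' : PDist A} (p : ℝ≥0) :
      R a D → PEvol R ds ds' → PEvol1 R ((p,a) :: ds) (scale p D ++ ds')
  | keep {ds ds' : PDist A} (p : ℝ≥0) (a : A) :
      PEvol1 R ds ds' → PEvol1 R ((p,a) :: ds) ((p,a) :: ds')

/-- The determinisation relation `↠ = ⇒_P ∪ ≈`. -/
def Red (R : A → PDist A → Prop) (D E : PDist A) : Prop := PEvol R D E ∨ DEquiv D E

/-- `R` defines a PARS: successor distributions are normalised. -/
def IsPARS (R : A → PDist A → Prop) : Prop := ∀ a D, R a D → weight D = 1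

/-- A terminal element has no successor distribution. -/
def Terminal (R : A → PDist A → Prop) (a : A) : Prop := ∀ D, ¬ R a D

/-- A terminal distribution contains only terminal elements. -/
def TerminalD (R : A → PDist A → Prop) (D : PDist A) : Prop := ∀ pa ∈ D, Terminal R pa.2

/-- Classical confluence of a relation. -/
def Confluent (r : X → X → Prop) : Prop :=
  ∀ a b c, ReflTransGen r a b → ReflTransGen r a c →
    ∃ d, ReflTransGen r b d ∧ ReflTransGen r c d

/-- Raw (finite) computation trees. -/
inductive CTree (A : Type) where
  | leaf (a : A)
  | node (a : A) (cs : List (ℝ≥0 × CTree A))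

def CTree.root : CTree A → A
  | .leaf a => a
  | .node a _ => a

/-- `IsTree R t a`: `t` is a computation tree of the PARS `R` with root `a`. -/
inductive IsTree (R : A → PDist A → Prop) : CTree A → A → Prop
  | leaf (a : A) : IsTree R (.leaf a) a
  | node (a : A) (cs : List (ℝ≥0 × CTree A)) :
      R a (cs.map fun x => (x.1, x.2.root)) →
      (∀ x ∈ cs, IsTree R x.2 x.2.root) →
      IsTree R (.node a cs) a

mutual
/-- Support of a computation tree. -/
def supp : CTree A → PDist A
  | .leaf a => [(1, a)]
  | .node _ cs => suppL cs
def suppL : List (ℝ≥0 × CTree A) → PDist A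
  | [] => []
  | (p, t) :: ts => scale p (supp t) ++ suppL ts
end

/-- A tree is maximal when all its leaves are terminal elements. -/
inductive MaximalT (R : A → PDist A → Prop) : CTree A → Prop
  | leaf (a : A) : Terminal R a → MaximalT R (.leaf a)
  | node (a : A) (cs : List (ℝ≥0 × CTree A)) :
      (∀ x ∈ cs, MaximalT R x.2) → MaximalT R (.node a cs)

end PPARS


namespace PPARS

lemma SimStep.symm' {D E : PDist A} (h : SimStep D E) : SimStep E D := by
  rcases h with h | h | h
  · rcases h with ⟨E₁, E₂, p, q, a, b⟩
    exact Or.inl (FlipS.mk E₁ E₂ q p b a)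
  · rcases h with ⟨E₁, E₂, p, q, a⟩
    exact Or.inr (Or.inr (SplitS.mk E₁ E₂ p q a))
  · rcases h with ⟨E₁, E₂, p, q, a⟩
    exact Or.inr (Or.inl (JoinS.mk E₁ E₂ p q a))

lemma DEquiv.symm' {D E : PDist A} (h : DEquiv D E) : DEquiv E D :=
  (@Relation.ReflTransGen.stdSymm _ SimStep ⟨fun _ _ h => SimStep.symm' h⟩).symm _ _ h

lemma terminalD_append {R : A → PDist A → Prop} {X Y : PDist A} :
    TerminalD R (X ++ Y) ↔ TerminalD R X ∧ TerminalD R Y := by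
  simp [TerminalD, List.mem_append, or_imp, forall_and]

lemma terminalD_cons {R : A → PDist A → Prop} {p : ℝ≥0} {a : A} {X : PDist A} :
    TerminalD R ((p, a) :: X) ↔ Terminal R a ∧ TerminalD R X := by
  simp [TerminalD, forall_and]

lemma terminalD_nil {R : A → PDist A → Prop} : TerminalD R ([] : PDist A) := by
  simp [TerminalD]

lemma TerminalD.of_simStep {R : A → PDist A → Prop} {D E : PDist A}
    (hD : TerminalD R D) (h : SimStep D E) : TerminalD R E := by
  rcases h with h | h | h
  · rcases h with ⟨E₁, E₂, p, q, a, b⟩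
    simp only [List.cons_append, List.nil_append, terminalD_append, terminalD_cons] at hD ⊢
    tauto
  · rcases h with ⟨E₁, E₂, p, q, a⟩
    simp only [List.cons_append, List.nil_append, terminalD_append, terminalD_cons] at hD ⊢
    tauto
  · rcases h with ⟨E₁, E₂, p, q, a⟩
    simp only [List.cons_append, List.nil_append, terminalD_append, terminalD_cons] at hD ⊢
    tauto

lemma TerminalD.of_dequiv {R : A → PDist A → Prop} {D E : PDist A}
    (hD : TerminalD R D) (h : DEquiv D E) : TerminalD R E := by
  induction h with
  | refl => exact hD
  | tail _ hstep ih => exact ih.of_simStep hstep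

lemma PEvol.eq_of_terminal {R : A → PDist A → Prop} {D E : PDist A}
    (hD : TerminalD R D) (h : PEvol R D E) : E = D := by
  induction h with
  | nil => rfl
  | keep p a _ ih =>
    have : TerminalD R _ := fun pa hpa => hD pa (List.mem_cons_of_mem _ hpa)
    rw [ih this]
  | evolve p hr _ _ =>
    exact absurd hr (hD (_, _) List.mem_cons_self _)

lemma dequiv_of_rtg_red {R : A → PDist A → Prop} {D E : PDist A}
    (hD : TerminalD R D) (h : Relation.ReflTransGen (Red R) D E) :
    DEquiv D E ∧ TerminalD R E := by
  induction h with
  | refl => exact ⟨Relation.ReflTransGen.refl, hD⟩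
  | tail _ hstep ih =>
    rcases ih with ⟨heq, hterm⟩
    rcases hstep with hp | he
    · rw [hp.eq_of_terminal hterm]; exact ⟨heq, hterm⟩
    · exact ⟨heq.trans he, hterm.of_dequiv he⟩

end PPARS

open PPARS Relation in
/-- In a distribution-confluent PARS, two terminal distributions are `↠`-convertible
iff they are equivalent. -/
theorem terminal_convertible_iff_equiv {A : Type} (R : A → PDist A → Prop)
    (hR : IsPARS R) (hconf : Confluent (Red R)) {D₁ D₂ : PDist A}
    (h₁ : TerminalD R D₁) (h₂ : TerminalD R D₂) :
    Relation.EqvGen (Red R) D₁ D₂ ↔ DEquiv D₁ D₂ := by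
  constructor
  · intro h
    have join : ∃ E, ReflTransGen (Red R) D₁ E ∧ ReflTransGen (Red R) D₂ E := by
      clear h₁ h₂
      induction h with
      | rel a b hab => exact ⟨b, ReflTransGen.single hab, ReflTransGen.refl⟩
      | refl a => exact ⟨a, ReflTransGen.refl, ReflTransGen.refl⟩
      | symm a b _ ih => exact ⟨ih.choose, ih.choose_spec.2, ih.choose_spec.1⟩
      | trans a b c _ _ ih₁ ih₂ =>
        obtain ⟨e₁, h₁, h₂⟩ := ih₁
        obtain ⟨e₂, h₃, h₄⟩ := ih₂
        obtain ⟨d, hd₁, hd₂⟩ := hconf b e₁ e₂ h₂ h₃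
        exact ⟨d, h₁.trans hd₁, h₄.trans hd₂⟩
    obtain ⟨E, hE₁, hE₂⟩ := join
    have q₁ := dequiv_of_rtg_red h₁ hE₁
    have q₂ := dequiv_of_rtg_red h₂ hE₂
    exact q₁.1.trans q₂.1.symm'
  · intro h
    exact EqvGen.rel _ _ (Or.inr h)
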